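/- Let 0 ≤ ε ≤ 1/(2r) and let H be an r×r Hermitian positive definite matrix with Hᵀ·H = I and |H_{ij}| ≤ ε·H_{ii}^{1/2}·H_{jj}^{1/2} for all i ≠ j. Then setting A = Σ_j H_{jj}, one has H_{ii} ≤ ε·A + 1 for every i, and consequently A ≤ 2r. -/

import Mathlib

open scoped ComplexOrder

/-- Let `0 ≤ ε ≤ 1/(2r)` and `H` an `r × r` Hermitian positive definite matrix with
`Hᵀ·H = 1` and `|H_{ij}| ≤ ε·(H_{ii} H_{jj})^{1/2}` for `i ≠ j`.  With `A = ∑_j H_{jj}`,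
one has `H_{ii} ≤ ε·A + 1` for every `i`, and consequently `A ≤ 2r`. -/
theorem stmt2 (r : ℕ) (hr : 0 < r) (ε : ℝ) (hε0 : 0 ≤ ε) (hε : ε ≤ 1 / (2 * r))
    (H : Matrix (Fin r) (Fin r) ℂ) (hpos : H.PosDef) (horth : H.transpose * H = 1)
    (hoff : ∀ i j : Fin r, i ≠ j →
      ‖H i j‖ ≤ ε * Real.sqrt ((H i i).re * (H j j).re)) :
    (∀ i, (H i i).re ≤ ε * (∑ j, (H j j).re) + 1) ∧ (∑ j, (H j j).re) ≤ 2 * r := by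
  have hH := hpos.isHermitian
  -- diagonal entries are positive
  have hdpos : ∀ i, 0 < (H i i).re := by
    intro i
    have h := hpos.dotProduct_mulVec_pos (x := Pi.single i 1) (by
      intro h
      have := congrFun h i
      simp [Pi.single_apply] at this)
    simp [dotProduct, Matrix.mulVec, Pi.single_apply, Finset.sum_ite_eq,
      Complex.lt_def] at h
    exact h.1
  -- Hermitian: |H j i| = |H i j|
  have habs : ∀ i j, ‖H j i‖ = ‖H i j‖ := by
    intro i j
    rw [← hH.apply i j]
    simp
  -- ε small
  have hrr : (1:ℝ) ≤ r := by exact_mod_cast hr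
  have hε1 : ε ≤ 1/2 := le_trans hε (by
    rw [div_le_div_iff₀ (by positivity) (by norm_num)]
    nlinarith)
  set A := ∑ j, (H j j).re with hA
  have hApos : 0 < A := Finset.sum_pos (fun j _ => hdpos j) ⟨⟨0, hr⟩, Finset.mem_univ _⟩
  -- key quadratic inequality
  have key : ∀ i, ((H i i).re)^2 ≤ 1 + ε * (H i i).re * A := by
    intro i
    have h1 : (∑ j, H j i * H j i) = 1 := by
      have := congrFun (congrFun horth i) i
      simpa [Matrix.mul_apply, Matrix.transpose_apply, Matrix.one_apply] using this
    have h2 : (∑ j, ((H j i * H j i).re)) = 1 := by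
      have := congrArg Complex.re h1
      simpa [Complex.re_sum] using this
    -- split off j = i
    rw [← Finset.add_sum_erase _ _ (Finset.mem_univ i)] at h2
    have him : (H i i).im = 0 := by
      have := hH.coe_re_apply_self i
      have h' := congrArg Complex.im this
      simpa using h'.symm
    have hii : (H i i * H i i).re = ((H i i).re)^2 := by
      simp [Complex.mul_re, him]; ring
    -- bound remaining terms from below
    have hrest : -(ε * (H i i).re * A) ≤ ∑ j ∈ Finset.univ.erase i, ((H j i * H j i).re) := by
      have hterm : ∀ j ∈ Finset.univ.erase i,
          -(ε * (H i i).re * (H j j).re) ≤ (H j i * H j i).re := by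
        intro j hj
        have hji : j ≠ i := Finset.ne_of_mem_erase hj
        have hb := hoff j i hji
        rw [habs i j] at hb
        have hsq : ‖H i j‖^2 ≤ ε^2 * ((H j j).re * (H i i).re) := by
          have h0 : 0 ≤ ‖H i j‖ := norm_nonneg _
          have hx : (ε * Real.sqrt ((H j j).re * (H i i).re))^2
              = ε^2 * ((H j j).re * (H i i).re) := by
            rw [mul_pow, Real.sq_sqrt (mul_nonneg (hdpos j).le (hdpos i).le)]
          nlinarith [Real.sqrt_nonneg ((H j j).re * (H i i).re)]
        have hre : -(‖H j i‖^2) ≤ (H j i * H j i).re := by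
          rw [Complex.mul_re, Complex.sq_norm, Complex.normSq_apply]
          nlinarith [sq_nonneg (H j i).re]
        rw [habs i j] at hre
        have hε2 : ε^2 ≤ ε := by nlinarith
        nlinarith [mul_nonneg (mul_nonneg (sub_nonneg.mpr hε2) (hdpos j).le) (hdpos i).le]
      have hS : ∑ j ∈ Finset.univ.erase i, -((H j i * H j i).re)
          ≤ ∑ j ∈ Finset.univ.erase i, ε * (H i i).re * (H j j).re :=
        Finset.sum_le_sum (fun j hj => by have := hterm j hj; linarith)
      rw [← Finset.mul_sum] at hS
      have hS2 : ∑ j ∈ Finset.univ.erase i, -((H j i * H j i).re)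
          = -(∑ j ∈ Finset.univ.erase i, ((H j i * H j i).re)) := by
        simp
      have hsub : ∑ j ∈ Finset.univ.erase i, (H j j).re ≤ A := by
        apply Finset.sum_le_sum_of_subset_of_nonneg (Finset.erase_subset _ _)
        intro j _ _; exact (hdpos j).le
      have h0 : 0 ≤ ε * (H i i).re := mul_nonneg hε0 (hdpos i).le
      nlinarith
    rw [hii] at h2
    linarith
  have hmain : ∀ i, (H i i).re ≤ ε * A + 1 := by
    intro i
    have hq := key i
    have hp := hdpos i
    nlinarith [sq_nonneg ((H i i).re - ε * A - 1)]
  refine ⟨hmain, ?_⟩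
  have hsum : A ≤ r * (ε * A + 1) := by
    calc A = ∑ j, (H j j).re := hA
      _ ≤ ∑ _j : Fin r, (ε * A + 1) := Finset.sum_le_sum (fun j _ => hmain j)
      _ = r * (ε * A + 1) := by
            simp [Finset.sum_const, Finset.card_fin, nsmul_eq_mul]; ring
  have hεr : ε * r ≤ 1/2 := by
    have h2r : (0:ℝ) < 2 * r := by positivity
    have := (le_div_iff₀ h2r).mp hε
    nlinarith
  nlinarith
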